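/- In the setting of a matched pair (P, N) with actions α̃, β̃ and Fourier kernel 𝔼 built from a character χ on N, define Φ(p, n) := 𝔼(p,n)/𝔼(e,n). Then Φ satisfies the bi-1-cocycle relations Φ(p p̃, n) = Φ(p, n)·Φ(p̃, α̃_{p⁻¹}(n)) and Φ(p, n ñ) = Φ(p, n)·Φ(β̃_{n⁻¹}(p), ñ). -/

import Mathlib

/-- The normalized kernel `Φ(p, n) := 𝔼(p,n)/𝔼(e,n)` satisfies the bi-1-cocycle relations
`Φ(p p̃, n) = Φ(p, n)·Φ(p̃, α̃_{p⁻¹}(n))` and `Φ(p, n ñ) = Φ(p, n)·Φ(β̃_{n⁻¹}(p), ñ)`. -/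
theorem fourier_kernel_bicocycle {G : Type*} [Group G] (P N : Subgroup G)
    (α : P → N → N) (β : N → P → P)
    (hdisj : P ⊓ N = ⊥)
    (hfac : ∀ (p : P) (n : N),
      (p : G) * (n : G)⁻¹ = ((α p n : G))⁻¹ * (β n p : G))
    (χ : N →* Circle)
    (αt : P → N → N) (βt : N → P → P)
    (hαt : ∀ p n, αt p n = (α p n⁻¹)⁻¹)
    (hβt : ∀ n p, βt n p = (β n p⁻¹)⁻¹)
    (E : P → N → Circle)
    (hE : ∀ p n, E p n = χ (αt p⁻¹ n))
    (Φ : P → N → Circle)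
    (hΦ : ∀ p n, Φ p n = E p n / E 1 n) :
    (∀ (p pt : P) (n : N), Φ (p * pt) n = Φ p n * Φ pt (αt p⁻¹ n)) ∧
    (∀ (p : P) (n nt : N), Φ p (n * nt) = Φ p n * Φ (βt n⁻¹ p) nt) := by
  -- uniqueness of the factorization g = n⁻¹ * p
  have uniq : ∀ (n₁ n₂ : N) (p₁ p₂ : P),
      ((n₁ : G))⁻¹ * (p₁ : G) = ((n₂ : G))⁻¹ * (p₂ : G) → n₁ = n₂ ∧ p₁ = p₂ := by
    intro n₁ n₂ p₁ p₂ h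
    have hx : (p₂ : G) * (p₁ : G)⁻¹ = (n₂ : G) * (n₁ : G)⁻¹ :=
      calc (p₂ : G) * (p₁ : G)⁻¹ = (n₂ : G) * (((n₂ : G))⁻¹ * (p₂ : G)) * (p₁ : G)⁻¹ := by group
        _ = (n₂ : G) * (((n₁ : G))⁻¹ * (p₁ : G)) * (p₁ : G)⁻¹ := by rw [h]
        _ = (n₂ : G) * ((n₁ : G))⁻¹ := by group
    have hmemP : (p₂ : G) * (p₁ : G)⁻¹ ∈ P := mul_mem p₂.2 (inv_mem p₁.2)
    have hmemN : (p₂ : G) * (p₁ : G)⁻¹ ∈ N := hx ▸ mul_mem n₂.2 (inv_mem n₁.2)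
    have hone : (p₂ : G) * (p₁ : G)⁻¹ = 1 := by
      have : (p₂ : G) * (p₁ : G)⁻¹ ∈ P ⊓ N := ⟨hmemP, hmemN⟩
      rw [hdisj, Subgroup.mem_bot] at this
      exact this
    have hp : p₁ = p₂ := by
      ext
      exact (mul_inv_eq_one.mp hone).symm
    have hn : n₁ = n₂ := by
      ext
      rw [hone] at hx
      exact (mul_inv_eq_one.mp hx.symm).symm
    exact ⟨hn, hp⟩
  -- α is a left action, and cocycle identity for β
  have key1 : ∀ (q r : P) (m : N), α (q * r) m = α q (α r m) := by
    intro q r m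
    have h : ((α (q*r) m : G))⁻¹ * (β m (q*r) : G)
        = ((α q (α r m) : G))⁻¹ * ((β (α r m) q * β m r : P) : G) := by
      rw [← hfac (q*r) m]
      push_cast
      rw [mul_assoc, hfac r m, ← mul_assoc, hfac q (α r m)]
      group
    exact (uniq _ _ _ _ h).1
  -- α of a product, cocycle identity
  have key2 : ∀ (p : P) (n m : N), α p (n * m) = α (β m p) n * α p m := by
    intro p n m
    have h : ((α p (n*m) : G))⁻¹ * (β (n*m) p : G)
        = (((α (β m p) n * α p m : N)) : G)⁻¹ * (β n (β m p) : G) := by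
      rw [← hfac p (n*m)]
      push_cast
      rw [mul_inv_rev, ← mul_assoc, hfac p m, mul_assoc, hfac (β m p) n]
      group
    exact (uniq _ _ _ _ h).1
  -- translate to αt
  have kt1 : ∀ (p pt : P) (n : N), αt (p * pt)⁻¹ n = αt pt⁻¹ (αt p⁻¹ n) := by
    intro p pt n
    simp only [hαt, inv_inv, mul_inv_rev]
    rw [key1]
  have kt2 : ∀ (p : P) (n m : N), αt p⁻¹ (n * m) = αt p⁻¹ n * αt (β n⁻¹ p⁻¹) m := by
    intro p n m
    simp only [hαt, inv_inv]
    rw [mul_inv_rev, key2, mul_inv_rev]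
  -- α 1 n = n
  have hα1 : ∀ n : N, α 1 n = n := by
    intro n
    have h : ((α 1 n : G))⁻¹ * (β n 1 : G) = ((n : G))⁻¹ * ((1 : P) : G) := by
      rw [← hfac 1 n]; simp
    exact (uniq _ _ _ _ h).1
  constructor
  · intro p pt n
    simp only [hΦ, hE, kt1]
    simp only [hαt, inv_inv, inv_one, hα1]
    rw [mul_comm, div_mul_div_cancel]
  · intro p n nt
    have hb : (βt n⁻¹ p)⁻¹ = β n⁻¹ p⁻¹ := by rw [hβt]; simp
    rw [hΦ p (n*nt), hΦ p n, hΦ _ nt]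
    simp only [hE, hb, hαt, inv_inv, inv_one, hα1]
    rw [mul_inv_rev, key2, mul_inv_rev]
    simp only [map_mul, map_inv]
    exact mul_div_mul_comm _ _ _ _
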